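/- Let F : ℝⁿ → ℝⁿ be a differentiable map such that det(DF_x) ≠ 0 for all x ∈ ℝⁿ. For t ∈ ℝ, let F_t : ℝⁿ → ℝⁿ denote the map F_t(x) = F(x) − t·x. If there exists a sequence {t_m} of real numbers converging to 0 such that every map F_{t_m} : ℝⁿ → ℝⁿ is injective, then F is injective. -/

import Mathlib

open Metric Set MeasureTheory Filter Function
open scoped Topology ENNReal RealInnerProductSpace

section Helpers

variable {n : ℕ}

local notation "E" => EuclideanSpace ℝ (Fin n)

/-- A continuous linear map with nonzero determinant is a continuous linear equiv. -/
lemma stmt6_exists_cle (T : (E) →L[ℝ] (E)) (h : LinearMap.det (T : (E) →ₗ[ℝ] (E)) ≠ 0) :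
    ∃ e : (E) ≃L[ℝ] (E), ∀ v, e v = T v := by
  refine ⟨((T : (E) →ₗ[ℝ] (E)).equivOfDetNeZero h).toContinuousLinearEquiv, fun v => ?_⟩
  rfl

/-- Lower bound `‖T v‖ ≥ c ‖v‖`. -/
lemma stmt6_exists_antilip (T : (E) →L[ℝ] (E)) (h : LinearMap.det (T : (E) →ₗ[ℝ] (E)) ≠ 0) :
    ∃ c > (0:ℝ), ∀ v, c * ‖v‖ ≤ ‖T v‖ := by
  obtain ⟨e, he⟩ := stmt6_exists_cle T h
  set M : ℝ := ‖(e.symm : (E) →L[ℝ] (E))‖ with hM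
  have hM0 : 0 ≤ M := norm_nonneg _
  refine ⟨(M + 1)⁻¹, by positivity, fun v => ?_⟩
  have h1 : ‖v‖ ≤ (M + 1) * ‖T v‖ := by
    have := (e.symm : (E) →L[ℝ] (E)).le_opNorm (e v)
    rw [show (e.symm : (E) →L[ℝ] (E)) (e v) = v from e.symm_apply_apply v, he v] at this
    nlinarith [norm_nonneg (T v)]
  rw [inv_mul_le_iff₀ (by positivity)]
  linarith

/-- Local expansion bound at a point with invertible derivative. -/
lemma stmt6_expansion {G : (E) → (E)} {b : E} (hG : DifferentiableAt ℝ G b)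
    (hdet : LinearMap.det (fderiv ℝ G b : (E) →ₗ[ℝ] (E)) ≠ 0) :
    ∃ c > (0:ℝ), ∃ r > (0:ℝ), ∀ x ∈ closedBall b r, c * ‖x - b‖ ≤ ‖G x - G b‖ := by
  set A := fderiv ℝ G b with hA
  obtain ⟨c₀, hc₀, hal⟩ := stmt6_exists_antilip A hdet
  have hd : HasFDerivAt G A b := hG.hasFDerivAt
  have hlo := hd.isLittleO.def (show (0:ℝ) < c₀ / 2 by positivity)
  rw [Metric.eventually_nhds_iff] at hlo
  obtain ⟨ε, hε, hball⟩ := hlo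
  refine ⟨c₀ / 2, by positivity, ε / 2, by positivity, fun x hx => ?_⟩
  have hx' : dist x b < ε := lt_of_le_of_lt (mem_closedBall.1 hx) (by linarith)
  have h1 : ‖G x - G b - A (x - b)‖ ≤ c₀ / 2 * ‖x - b‖ := hball hx'
  have h2 : c₀ * ‖x - b‖ ≤ ‖A (x - b)‖ := hal _
  have h3 : ‖A (x - b)‖ ≤ ‖G x - G b‖ + ‖G x - G b - A (x - b)‖ := by
    calc ‖A (x - b)‖ = ‖(G x - G b) - (G x - G b - A (x - b))‖ := by congr 1; abel
    _ ≤ _ := norm_sub_le _ _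
  linarith

/-- Local surjectivity near a point, via minimization of the distance squared. -/
lemma stmt6_surj_ball {G : (E) → (E)} (hG : Differentiable ℝ G)
    (hdet : ∀ x, LinearMap.det (fderiv ℝ G x : (E) →ₗ[ℝ] (E)) ≠ 0)
    (b : E) {ρ : ℝ} (hρ : 0 < ρ) :
    ∃ δ > (0:ℝ), ball (G b) δ ⊆ G '' closedBall b ρ := by
  obtain ⟨c, hc, r₀, hr₀, hexp⟩ := stmt6_expansion (hG b) (hdet b)
  set r := min ρ r₀ with hrdef
  have hr : 0 < r := lt_min hρ hr₀
  refine ⟨c * r / 4, by positivity, fun z hz => ?_⟩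
  have hzb : ‖G b - z‖ < c * r / 4 := by
    rw [mem_ball, dist_comm, dist_eq_norm] at hz; exact hz
  obtain ⟨x₀, hx₀K, hmin⟩ := (isCompact_closedBall b r).exists_isMinOn
    ⟨b, mem_closedBall_self hr.le⟩
    (Continuous.continuousOn ((hG.continuous.sub continuous_const).norm))
  have hx₀val : ‖G x₀ - z‖ < c * r / 4 := lt_of_le_of_lt (hmin (mem_closedBall_self hr.le)) hzb
  have hx₀in : x₀ ∈ ball b r := by
    rw [mem_ball, dist_eq_norm]
    rcases lt_or_eq_of_le (mem_closedBall_iff_norm.1 hx₀K) with h | h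
    · exact h
    · exfalso
      have hsub : x₀ ∈ closedBall b r₀ :=
        closedBall_subset_closedBall (min_le_right ρ r₀) hx₀K
      have h1 : c * r ≤ ‖G x₀ - G b‖ := by
        have := hexp x₀ hsub; rw [h] at this; exact this
      have h2 : ‖G x₀ - G b‖ ≤ ‖G x₀ - z‖ + ‖G b - z‖ := by
        calc ‖G x₀ - G b‖ = ‖(G x₀ - z) - (G b - z)‖ := by congr 1; abel
        _ ≤ _ := norm_sub_le _ _
      nlinarith
  have hlocmin : IsLocalMin (fun x : E => ⟪G x - z, G x - z⟫) x₀ := by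
    have h2 : IsMinOn (fun x : E => ⟪G x - z, G x - z⟫) (closedBall b r) x₀ := by
      intro x hx
      simp only [Set.mem_setOf_eq, real_inner_self_eq_norm_sq]
      have h1 : ‖G x₀ - z‖ ≤ ‖G x - z‖ := hmin hx
      have h0 : (0:ℝ) ≤ ‖G x₀ - z‖ := norm_nonneg _
      nlinarith
    exact h2.isLocalMin (mem_nhds_iff.2 ⟨ball b r, ball_subset_closedBall, isOpen_ball, hx₀in⟩)
  set A₀ := fderiv ℝ G x₀ with hA₀
  have hGd : HasFDerivAt (fun x : E => G x - z) A₀ x₀ := (hG x₀).hasFDerivAt.sub_const z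
  have hzero := hlocmin.hasFDerivAt_eq_zero (hGd.inner ℝ hGd)
  obtain ⟨e, he⟩ := stmt6_exists_cle A₀ (hdet x₀)
  set w := G x₀ - z with hw
  have happ := congrFun (congrArg DFunLike.coe hzero) (e.symm w)
  have hev : A₀ (e.symm w) = w := by rw [← he]; exact e.apply_symm_apply w
  simp only [ContinuousLinearMap.coe_comp', Function.comp_apply,
    ContinuousLinearMap.prod_apply, fderivInnerCLM_apply, hev,
    ContinuousLinearMap.zero_apply] at happ
  have hw0 : w = 0 := by
    rw [← inner_self_eq_zero (𝕜 := ℝ) (x := w)]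
    linarith [real_inner_self_nonneg (x := w)]
  refine ⟨x₀, closedBall_subset_closedBall (min_le_left ρ r₀) hx₀K, ?_⟩
  have : G x₀ - z = 0 := hw0
  linear_combination (norm := module) this

/-- The key statement, on Euclidean space. -/
lemma stmt6_key {G : (E) → (E)} (hG : Differentiable ℝ G)
    (hdet : ∀ x, LinearMap.det (fderiv ℝ G x : (E) →ₗ[ℝ] (E)) ≠ 0)
    (t : ℕ → ℝ) (ht : Tendsto t atTop (𝓝 0))
    (hinj : ∀ m : ℕ, Injective (fun x : E => G x - t m • x)) :
    Injective G := by
  intro a b hab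
  by_contra hne
  have hd : (0:ℝ) < ‖a - b‖ := by
    rw [norm_pos_iff, sub_ne_zero]; exact hne
  set ρ : ℝ := ‖a - b‖ / 3 with hρdef
  have hρ : 0 < ρ := by positivity
  set Ka := closedBall a ρ with hKa
  set Kb := closedBall b ρ with hKb
  have hKac : IsCompact Ka := isCompact_closedBall a ρ
  have hKbc : IsCompact Kb := isCompact_closedBall b ρ
  have hdisj : Disjoint Ka Kb := by
    apply closedBall_disjoint_closedBall
    rw [dist_eq_norm]; linarith
  obtain ⟨δa, hδa, hsa⟩ := stmt6_surj_ball hG hdet a hρ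
  obtain ⟨δb, hδb, hsb⟩ := stmt6_surj_ball hG hdet b hρ
  set y := G a with hy
  set δ := min δa δb with hδdef
  have hδ : 0 < δ := lt_min hδa hδb
  have hVa : ball y δ ⊆ G '' Ka := (ball_subset_ball (min_le_left _ _)).trans hsa
  have hVb : ball y δ ⊆ G '' Kb := by
    rw [hab]; exact (ball_subset_ball (min_le_right _ _)).trans hsb
  set Gm : ℕ → (E) → (E) := fun m x => G x - t m • x with hGmdef
  have hGm : ∀ m, Differentiable ℝ (Gm m) :=
    fun m => hG.sub (differentiable_id.const_smul (t m))
  set Dm : ℕ → (E) → ((E) →L[ℝ] (E)) :=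
    fun m x => fderiv ℝ G x - t m • ContinuousLinearMap.id ℝ (E) with hDmdef
  have hDm : ∀ m x, HasFDerivAt (Gm m) (Dm m x) x :=
    fun m x => (hG x).hasFDerivAt.sub ((hasFDerivAt_id x).const_smul (t m))
  have hCoV : ∀ (m : ℕ) (K : Set (E)), MeasurableSet K →
      volume ((Gm m) '' K) = ∫⁻ x in K, ENNReal.ofReal |(Dm m x).det| :=
    fun m K hK => (lintegral_abs_det_fderiv_eq_addHaar_image volume hK
      (fun x _ => (hDm m x).hasFDerivWithinAt) ((hinj m).injOn)).symm
  have hArea : ∀ (K : Set (E)), MeasurableSet K →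
      volume (G '' K) ≤ ∫⁻ x in K, ENNReal.ofReal |(fderiv ℝ G x).det| :=
    fun K hK => addHaar_image_le_lintegral_abs_det_fderiv volume hK
      (fun x _ => (hG x).hasFDerivAt.hasFDerivWithinAt)
  have hmeas : ∀ m, Measurable fun x : E => ENNReal.ofReal |(Dm m x).det| := by
    intro m
    have hcont : Continuous fun T : (E) →L[ℝ] (E) =>
        ENNReal.ofReal |(T - t m • ContinuousLinearMap.id ℝ (E)).det| :=
      ENNReal.continuous_ofReal.comp (continuous_abs.comp
        (ContinuousLinearMap.continuous_det.comp (continuous_id.sub continuous_const)))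
    exact hcont.measurable.comp (measurable_fderiv ℝ G)
  have hpt : ∀ x : E, ENNReal.ofReal |(fderiv ℝ G x).det| =
      liminf (fun m => ENNReal.ofReal |(Dm m x).det|) atTop := by
    intro x
    have hcont : Continuous fun s : ℝ =>
        ENNReal.ofReal |(fderiv ℝ G x - s • ContinuousLinearMap.id ℝ (E)).det| :=
      ENNReal.continuous_ofReal.comp (continuous_abs.comp
        (ContinuousLinearMap.continuous_det.comp (continuous_const.sub
          (continuous_id.smul continuous_const))))
    have h0 : Tendsto (fun m => ENNReal.ofReal |(Dm m x).det|) atTop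
        (𝓝 (ENNReal.ofReal |(fderiv ℝ G x - (0:ℝ) • ContinuousLinearMap.id ℝ (E)).det|)) :=
      (hcont.tendsto 0).comp ht
    have he0 : fderiv ℝ G x - (0:ℝ) • ContinuousLinearMap.id ℝ (E) = fderiv ℝ G x := by
      ext v; simp
    rw [he0] at h0
    exact h0.liminf_eq.symm
  have hlow : ∀ K : Set (E), MeasurableSet K →
      volume (G '' K) ≤ liminf (fun m => volume ((Gm m) '' K)) atTop := by
    intro K hK
    calc volume (G '' K) ≤ ∫⁻ x in K, ENNReal.ofReal |(fderiv ℝ G x).det| := hArea K hK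
    _ = ∫⁻ x in K, liminf (fun m => ENNReal.ofReal |(Dm m x).det|) atTop :=
        lintegral_congr fun x => hpt x
    _ ≤ liminf (fun m => ∫⁻ x in K, ENNReal.ofReal |(Dm m x).det|) atTop :=
        lintegral_liminf_le hmeas
    _ = liminf (fun m => volume ((Gm m) '' K)) atTop := by
        apply liminf_congr; filter_upwards with m; exact (hCoV m K hK).symm
  have hsub : ∀ (m : ℕ) (K : Set (E)) (R : ℝ), (∀ x ∈ K, ‖x‖ ≤ R) →
      (Gm m) '' K ⊆ cthickening (|t m| * R) (G '' K) := by
    rintro m K R hKR z ⟨x, hx, rfl⟩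
    apply mem_cthickening_of_dist_le (Gm m x) (G x) _ _ (mem_image_of_mem G hx)
    rw [dist_eq_norm]
    have : Gm m x - G x = -(t m • x) := by simp [hGmdef]
    rw [this, norm_neg, norm_smul, Real.norm_eq_abs]
    exact mul_le_mul_of_nonneg_left (hKR x hx) (abs_nonneg _)
  have hthick : ∀ (K : Set (E)) (R : ℝ), IsCompact K →
      Tendsto (fun m => volume (cthickening (|t m| * R) (G '' K))) atTop
        (𝓝 (volume (G '' K))) := by
    intro K R hKc
    have hScl : IsClosed (G '' K) := (hKc.image hG.continuous).isClosed
    have hfin : ∃ ε > (0:ℝ), volume (cthickening ε (G '' K)) ≠ ⊤ :=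
      ⟨1, one_pos, ((hKc.image hG.continuous).isBounded.cthickening.measure_lt_top).ne⟩
    have hε : Tendsto (fun m => |t m| * R) atTop (𝓝 0) := by
      have h1 : Tendsto (fun m => |t m|) atTop (𝓝 |0|) := ht.abs
      rw [abs_zero] at h1
      simpa using h1.mul_const R
    exact (tendsto_measure_cthickening_of_isClosed hfin hScl).comp hε
  have hup : ∀ (K : Set (E)) (R : ℝ), IsCompact K → (∀ x ∈ K, ‖x‖ ≤ R) →
      Tendsto (fun m => volume ((Gm m) '' K)) atTop (𝓝 (volume (G '' K))) := by
    intro K R hKc hKR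
    apply tendsto_of_le_liminf_of_limsup_le (hlow K hKc.measurableSet)
    calc limsup (fun m => volume ((Gm m) '' K)) atTop
        ≤ limsup (fun m => volume (cthickening (|t m| * R) (G '' K))) atTop :=
          limsup_le_limsup (Eventually.of_forall fun m => measure_mono (hsub m K R hKR))
    _ = volume (G '' K) := (hthick K R hKc).limsup_eq
  set R : ℝ := max (‖a‖ + ρ) (‖b‖ + ρ) with hRdef
  have hRa : ∀ x ∈ Ka, ‖x‖ ≤ R := by
    intro x hx
    have h2 : ‖x‖ ≤ ‖a‖ + ρ := by
      have h1 : ‖x - a‖ ≤ ρ := mem_closedBall_iff_norm.1 hx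
      calc ‖x‖ = ‖(x - a) + a‖ := by congr 1; abel
      _ ≤ ‖x - a‖ + ‖a‖ := norm_add_le _ _
      _ ≤ ‖a‖ + ρ := by linarith
    exact h2.trans (le_max_left _ _)
  have hRb : ∀ x ∈ Kb, ‖x‖ ≤ R := by
    intro x hx
    have h2 : ‖x‖ ≤ ‖b‖ + ρ := by
      have h1 : ‖x - b‖ ≤ ρ := mem_closedBall_iff_norm.1 hx
      calc ‖x‖ = ‖(x - b) + b‖ := by congr 1; abel
      _ ≤ ‖x - b‖ + ‖b‖ := norm_add_le _ _
      _ ≤ ‖b‖ + ρ := by linarith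
    exact h2.trans (le_max_right _ _)
  have htA := hup Ka R hKac hRa
  have htB := hup Kb R hKbc hRb
  have htSum : Tendsto (fun m => volume ((Gm m) '' Ka) + volume ((Gm m) '' Kb)) atTop
      (𝓝 (volume (G '' Ka) + volume (G '' Kb))) := htA.add htB
  set S : Set (E) := G '' Ka ∪ G '' Kb with hSdef
  have hSclosed : IsClosed S :=
    ((hKac.image hG.continuous).union (hKbc.image hG.continuous)).isClosed
  have hSbd : Bornology.IsBounded S :=
    ((hKac.image hG.continuous).union (hKbc.image hG.continuous)).isBounded
  have hSfin : volume S ≠ ⊤ := (hSbd.measure_lt_top).ne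
  have hthickS : Tendsto (fun m => volume (cthickening (|t m| * R) S)) atTop (𝓝 (volume S)) := by
    have hfin : ∃ ε > (0:ℝ), volume (cthickening ε S) ≠ ⊤ :=
      ⟨1, one_pos, (hSbd.cthickening.measure_lt_top).ne⟩
    have hε : Tendsto (fun m => |t m| * R) atTop (𝓝 0) := by
      have h1 : Tendsto (fun m => |t m|) atTop (𝓝 |0|) := ht.abs
      rw [abs_zero] at h1
      simpa using h1.mul_const R
    exact (tendsto_measure_cthickening_of_isClosed hfin hSclosed).comp hε
  have hunion : ∀ m : ℕ, volume ((Gm m) '' Ka) + volume ((Gm m) '' Kb)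
      ≤ volume (cthickening (|t m| * R) S) := by
    intro m
    have hdisjm : Disjoint ((Gm m) '' Ka) ((Gm m) '' Kb) :=
      (Set.disjoint_image_iff (hinj m)).2 hdisj
    have hmeasb : MeasurableSet ((Gm m) '' Kb) :=
      ((hKbc.image (hGm m).continuous).isClosed).measurableSet
    rw [← measure_union hdisjm hmeasb]
    apply measure_mono
    apply Set.union_subset
    · exact (hsub m Ka R hRa).trans (cthickening_subset_of_subset _ subset_union_left)
    · exact (hsub m Kb R hRb).trans (cthickening_subset_of_subset _ subset_union_right)
  have hfinal : volume (G '' Ka) + volume (G '' Kb) ≤ volume S :=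
    le_of_tendsto_of_tendsto' htSum hthickS hunion
  have hBmeas : MeasurableSet (G '' Kb) := ((hKbc.image hG.continuous).isClosed).measurableSet
  have hie : volume S + volume ((G '' Ka) ∩ (G '' Kb)) = volume (G '' Ka) + volume (G '' Kb) :=
    measure_union_add_inter (G '' Ka) hBmeas
  have hzero : volume ((G '' Ka) ∩ (G '' Kb)) = 0 := by
    have hle : volume S + volume ((G '' Ka) ∩ (G '' Kb)) ≤ volume S + 0 := by
      rw [add_zero, hie]; exact hfinal
    exact le_zero_iff.1 ((ENNReal.add_le_add_iff_left hSfin).1 hle)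
  have hpos : 0 < volume (ball y δ) := measure_ball_pos volume y hδ
  have hball : volume (ball y δ) ≤ volume ((G '' Ka) ∩ (G '' Kb)) :=
    measure_mono (subset_inter hVa hVb)
  rw [hzero] at hball
  exact absurd (le_antisymm hball zero_le) hpos.ne'

end Helpers

theorem stmt6 {n : ℕ} (F : (Fin n → ℝ) → (Fin n → ℝ))
    (hdiff : Differentiable ℝ F)
    (hdet : ∀ x : Fin n → ℝ, LinearMap.det ((fderiv ℝ F x : (Fin n → ℝ) →L[ℝ] (Fin n → ℝ)) :
      (Fin n → ℝ) →ₗ[ℝ] (Fin n → ℝ)) ≠ 0)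
    (t : ℕ → ℝ) (ht : Filter.Tendsto t Filter.atTop (nhds 0))
    (hinj : ∀ m : ℕ, Function.Injective (fun x : Fin n → ℝ => F x - t m • x)) :
    Function.Injective F := by
  set φ : EuclideanSpace ℝ (Fin n) ≃L[ℝ] (Fin n → ℝ) :=
    PiLp.continuousLinearEquiv 2 ℝ (fun _ : Fin n => ℝ) with hφ
  set G : EuclideanSpace ℝ (Fin n) → EuclideanSpace ℝ (Fin n) :=
    fun x => φ.symm (F (φ x)) with hGdef
  have hGdiff : Differentiable ℝ G :=
    φ.symm.differentiable.comp (hdiff.comp φ.differentiable)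
  have hfd : ∀ x : EuclideanSpace ℝ (Fin n), HasFDerivAt G
      (((φ.symm : (Fin n → ℝ) →L[ℝ] EuclideanSpace ℝ (Fin n)).comp
        (fderiv ℝ F (φ x))).comp (φ : EuclideanSpace ℝ (Fin n) →L[ℝ] (Fin n → ℝ))) x := by
    intro x
    have h1 : HasFDerivAt F (fderiv ℝ F (φ x)) (φ x) := (hdiff (φ x)).hasFDerivAt
    have h2 := h1.comp x φ.hasFDerivAt
    exact (φ.symm.hasFDerivAt.comp x h2).congr_fderiv (by rw [ContinuousLinearMap.comp_assoc])
  have hGdet : ∀ x : EuclideanSpace ℝ (Fin n),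
      LinearMap.det ((fderiv ℝ G x : EuclideanSpace ℝ (Fin n) →L[ℝ] EuclideanSpace ℝ (Fin n)) :
        EuclideanSpace ℝ (Fin n) →ₗ[ℝ] EuclideanSpace ℝ (Fin n)) ≠ 0 := by
    intro x
    rw [(hfd x).fderiv]
    have hconj : LinearMap.det (((((φ.symm : (Fin n → ℝ) →L[ℝ] EuclideanSpace ℝ (Fin n)).comp
        (fderiv ℝ F (φ x))).comp (φ : EuclideanSpace ℝ (Fin n) →L[ℝ] (Fin n → ℝ))) :
          EuclideanSpace ℝ (Fin n) →L[ℝ] EuclideanSpace ℝ (Fin n)) :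
          EuclideanSpace ℝ (Fin n) →ₗ[ℝ] EuclideanSpace ℝ (Fin n))
        = LinearMap.det ((fderiv ℝ F (φ x) : (Fin n → ℝ) →L[ℝ] (Fin n → ℝ)) :
          (Fin n → ℝ) →ₗ[ℝ] (Fin n → ℝ)) := by
      rw [← LinearMap.det_conj ((fderiv ℝ F (φ x) : (Fin n → ℝ) →L[ℝ] (Fin n → ℝ)) :
          (Fin n → ℝ) →ₗ[ℝ] (Fin n → ℝ)) φ.symm.toLinearEquiv]
      congr 1
    rw [hconj]
    exact hdet (φ x)
  have hGinjm : ∀ m : ℕ, Injective (fun x : EuclideanSpace ℝ (Fin n) => G x - t m • x) := by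
    intro m
    have heq : (fun x : EuclideanSpace ℝ (Fin n) => G x - t m • x)
        = (φ.symm ∘ (fun u : Fin n → ℝ => F u - t m • u) ∘ φ) := by
      funext x
      simp only [hGdef, Function.comp_apply, map_sub, _root_.map_smul,
        ContinuousLinearEquiv.symm_apply_apply]
    rw [heq]
    exact φ.symm.injective.comp ((hinj m).comp φ.injective)
  have hGinj : Injective G := stmt6_key hGdiff hGdet t ht hGinjm
  intro u v huv
  have h1 : G (φ.symm u) = G (φ.symm v) := by
    simp only [hGdef, ContinuousLinearEquiv.apply_symm_apply, huv]
  have h2 := hGinj h1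
  calc u = φ (φ.symm u) := (φ.apply_symm_apply u).symm
  _ = φ (φ.symm v) := by rw [h2]
  _ = v := φ.apply_symm_apply v
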